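/- Let J be a strongly stable monomial ideal of K[x_1,…,x_m] (m ≥ 2) and let d ≥ 1 be an integer with x_{m−1}^d ∈ J. Then J has no minimal generator of degree d+1 if and only if every monomial u of degree d with x_m·u ∈ J already satisfies u ∈ J (i.e., the degree-d piece of the ideal quotient (J : x_m) equals the degree-d piece of J). -/

import Mathlib

open MvPolynomial

namespace Paper

variable {K : Type*} [Field K] {n : ℕ}

/-- `I` is a monomial ideal: together with any polynomial it contains all its monomials. -/
def IsMonomialIdeal (I : Ideal (MvPolynomial (Fin n) K)) : Prop :=
  ∀ f ∈ I, ∀ k ∈ f.support, (monomial k (1 : K)) ∈ I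

/-- `I` is a strongly stable (Borel fixed) monomial ideal. -/
def StronglyStable (I : Ideal (MvPolynomial (Fin n) K)) : Prop :=
  IsMonomialIdeal I ∧
    ∀ k : Fin n →₀ ℕ, (monomial k (1 : K)) ∈ I →
      ∀ i j : Fin n, j < i → k i ≠ 0 →
        (monomial (k + Finsupp.single j 1 - Finsupp.single i 1) (1 : K)) ∈ I

/-- The monomial with exponent vector `k` is a minimal generator of the monomial ideal `I`. -/
def IsMinGen (I : Ideal (MvPolynomial (Fin n) K)) (k : Fin n →₀ ℕ) : Prop :=
  (monomial k (1 : K)) ∈ I ∧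
    ∀ i : Fin n, k i ≠ 0 → (monomial (k - Finsupp.single i 1) (1 : K)) ∉ I

/-- The total degree of an exponent vector. -/
def expDeg (k : Fin n →₀ ℕ) : ℕ := k.sum fun _ e => e

/-- The smallest (1-based) index of a variable occurring in the monomial `x^k`. -/
noncomputable def minIdx (k : Fin n →₀ ℕ) : ℕ :=
  sInf {v : ℕ | ∃ i : Fin n, k i ≠ 0 ∧ v = (i : ℕ) + 1}

/-- The largest (1-based) index of a variable occurring in the monomial `x^k`. -/
noncomputable def maxIdx (k : Fin n →₀ ℕ) : ℕ :=
  sSup {v : ℕ | ∃ i : Fin n, k i ≠ 0 ∧ v = (i : ℕ) + 1}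

/-- `D(I)`: the maximum of `min(m)` over minimal generators `m` of `I`. -/
noncomputable def DD (I : Ideal (MvPolynomial (Fin n) K)) : ℕ :=
  sSup {v : ℕ | ∃ k : Fin n →₀ ℕ, IsMinGen I k ∧ v = minIdx k}

/-- `M(I)`: the maximum of `max(m)` over minimal generators `m` of `I`. -/
noncomputable def MM (I : Ideal (MvPolynomial (Fin n) K)) : ℕ :=
  sSup {v : ℕ | ∃ k : Fin n →₀ ℕ, IsMinGen I k ∧ v = maxIdx k}

/-- The Hilbert function of `R/I` in (integer) degree `t`:
the `K`-dimension of the degree-`t` graded piece of `R/I`. -/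
noncomputable def HF (I : Ideal (MvPolynomial (Fin n) K)) (t : ℤ) : ℕ :=
  if 0 ≤ t then
    Module.finrank K (homogeneousSubmodule (Fin n) K t.toNat) -
      Module.finrank K
        ((homogeneousSubmodule (Fin n) K t.toNat ⊓ Submodule.restrictScalars K I :
          Submodule K (MvPolynomial (Fin n) K)))
  else 0

/-- The first difference `ΔH(R/I,t) = H(R/I,t) - H(R/I,t-1)` of the Hilbert function. -/
noncomputable def dH (I : Ideal (MvPolynomial (Fin n) K)) (t : ℤ) : ℤ :=
  (HF I t : ℤ) - HF I (t - 1)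

/-- The second difference of the Hilbert function. -/
noncomputable def d2H (I : Ideal (MvPolynomial (Fin n) K)) (t : ℤ) : ℤ :=
  dH I t - dH I (t - 1)

/-- The irrelevant maximal ideal `(x_1, …, x_n)`. -/
noncomputable def irrel (n : ℕ) (K : Type*) [Field K] : Ideal (MvPolynomial (Fin n) K) :=
  Ideal.span (Set.range X)

/-- `I` is saturated: `(I : (x_1,…,x_n)) = I`. -/
def IsSaturatedIdeal (I : Ideal (MvPolynomial (Fin n) K)) : Prop :=
  Submodule.colon I (irrel n K) = I

/-- The saturation `I^sat = ⋃ₖ (I : (x_1,…,x_n)^k)`. -/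
noncomputable def saturation (I : Ideal (MvPolynomial (Fin n) K)) :
    Ideal (MvPolynomial (Fin n) K) :=
  ⨆ k : ℕ, Submodule.colon I ((irrel n K) ^ k : Ideal (MvPolynomial (Fin n) K))

/-- `I` is a homogeneous ideal: it contains all homogeneous components of its elements. -/
def IsHomogeneousIdeal (I : Ideal (MvPolynomial (Fin n) K)) : Prop :=
  ∀ f ∈ I, ∀ i : ℕ, homogeneousComponent i f ∈ I

/-- `⟨I_{≤ d}⟩`: the ideal generated by the homogeneous elements of `I` of degree at most `d`. -/
noncomputable def idealLE (I : Ideal (MvPolynomial (Fin n) K)) (d : ℕ) : Ideal (MvPolynomial (Fin n) K) :=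
  Ideal.span {f | f ∈ I ∧ ∃ e : ℕ, e ≤ d ∧ f.IsHomogeneous e}

/-- The initial degree of `I`: the least `t` with `I_t ≠ 0`. -/
noncomputable def initDeg (I : Ideal (MvPolynomial (Fin n) K)) : ℕ :=
  sInf {t : ℕ | ∃ f ∈ I, f ≠ 0 ∧ f.IsHomogeneous t}

/-- First difference operator for integer-indexed functions. -/
def diffFun (f : ℤ → ℤ) : ℤ → ℤ := fun t => f t - f (t - 1)

/-- The depth of `R/I` with respect to the irrelevant maximal ideal: the maximal length of an
`R/I`-regular sequence of homogeneous elements of positive degree. -/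
noncomputable def homDepth (I : Ideal (MvPolynomial (Fin n) K)) : ℕ :=
  sSup {k : ℕ | ∃ rs : List (MvPolynomial (Fin n) K), rs.length = k ∧
    (∀ r ∈ rs, ∃ e : ℕ, 0 < e ∧ r.IsHomogeneous e) ∧
    RingTheory.Sequence.IsRegular (MvPolynomial (Fin n) K ⧸ I) rs}

/-- The affine cone over a set of points of projective space `ℙ^{n-1}`. -/
def cone (Z : Set (Projectivization K (Fin n → K))) : Set (Fin n → K) :=
  {v | v = 0 ∨ ∃ hv : v ≠ 0, Projectivization.mk K v hv ∈ Z}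

/-- The homogeneous vanishing ideal of a set of points of projective space:
all polynomials vanishing on the affine cone. -/
def vIdeal (Z : Set (Projectivization K (Fin n → K))) : Ideal (MvPolynomial (Fin n) K) where
  carrier := {f | ∀ v ∈ cone Z, eval v f = 0}
  add_mem' := by
    intro a b ha hb v hv
    simp [map_add, ha v hv, hb v hv]
  zero_mem' := by
    intro v hv
    simp
  smul_mem' := by
    intro c f hf v hv
    simp [smul_eq_mul, hf v hv]

/-- The Uniform Position Property: any two subsets of the same cardinality have the same
Hilbert function. -/
def UPP (Z : Finset (Projectivization K (Fin n → K))) : Prop :=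
  ∀ A B : Finset (Projectivization K (Fin n → K)), A ⊆ Z → B ⊆ Z → A.card = B.card →
    ∀ t : ℤ, HF (vIdeal (A : Set (Projectivization K (Fin n → K)))) t =
      HF (vIdeal (B : Set (Projectivization K (Fin n → K)))) t

/-- `g₂(I,t)`: the minimum over pairs of linear forms `(L₁,L₂)` of
`dim_K (R/(I + (L₁,L₂)))_t` (the value attained by a generic pair). -/
noncomputable def g2 (I : Ideal (MvPolynomial (Fin n) K)) (t : ℤ) : ℕ :=
  sInf {v : ℕ | ∃ L₁ L₂ : MvPolynomial (Fin n) K, L₁.IsHomogeneous 1 ∧ L₂.IsHomogeneous 1 ∧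
    v = HF (I ⊔ Ideal.span {L₁, L₂}) t}

/-- The Artinian reduction of `R/I` has the Weak Lefschetz Property. -/
def WLP (I : Ideal (MvPolynomial (Fin n) K)) : Prop :=
  ∃ L₁ L₂ : MvPolynomial (Fin n) K, L₁.IsHomogeneous 1 ∧ L₂.IsHomogeneous 1 ∧
    (∀ g, L₁ * g ∈ I → g ∈ I) ∧
    ∀ t : ℕ,
      (∀ f : MvPolynomial (Fin n) K, f.IsHomogeneous t →
        L₂ * f ∈ I ⊔ Ideal.span {L₁} → f ∈ I ⊔ Ideal.span {L₁}) ∨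
      (∀ g : MvPolynomial (Fin n) K, g.IsHomogeneous (t + 1) →
        ∃ f : MvPolynomial (Fin n) K, f.IsHomogeneous t ∧ g - L₂ * f ∈ I ⊔ Ideal.span {L₁})

lemma expDeg_add {n : ℕ} (a b : Fin n →₀ ℕ) : expDeg (a + b) = expDeg a + expDeg b :=
  Finsupp.sum_add_index' (fun _ => rfl) (fun _ _ _ => rfl)

lemma expDeg_single {n : ℕ} (i : Fin n) (e : ℕ) : expDeg (Finsupp.single i e) = e :=
  Finsupp.sum_single_index rfl

lemma expDeg_eq_sum {n : ℕ} (k : Fin n →₀ ℕ) : expDeg k = ∑ i, k i := by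
  rw [expDeg, Finsupp.sum_fintype]
  intro; rfl

lemma finsupp_add_sub_cancel {m : ℕ} (a b : Fin m →₀ ℕ) : a + b - b = a := by
  ext x
  rw [Finsupp.tsub_apply, Finsupp.add_apply]
  omega

lemma finsupp_sub_add_cancel {m : ℕ} (k : Fin m →₀ ℕ) (i : Fin m) (h : k i ≠ 0) :
    k - Finsupp.single i 1 + Finsupp.single i 1 = k := by
  ext a
  rcases eq_or_ne i a with rfl | hne
  · rw [Finsupp.add_apply, Finsupp.tsub_apply, Finsupp.single_eq_same]
    omega
  · rw [Finsupp.add_apply, Finsupp.tsub_apply, Finsupp.single_eq_of_ne' hne]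
    omega

lemma W_add_single {m : ℕ} (v : Fin m →₀ ℕ) (j : Fin m) :
    ∑ a : Fin m, ((v + Finsupp.single j 1) : Fin m →₀ ℕ) a * (a : ℕ)
      = (∑ a : Fin m, v a * (a : ℕ)) + (j : ℕ) := by
  have h : ∀ a : Fin m, ((v + Finsupp.single j 1) : Fin m →₀ ℕ) a * (a : ℕ)
      = v a * (a : ℕ) + (if j = a then (a : ℕ) else 0) := by
    intro a
    rw [Finsupp.add_apply, Finsupp.single_apply, add_mul]
    congr 1
    split <;> simp
  rw [Finset.sum_congr rfl (fun a _ => h a), Finset.sum_add_distrib]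
  congr 1
  simp

lemma eq_single_of_no_low {m : ℕ} (hm : 2 ≤ m) (k : Fin m →₀ ℕ) {d : ℕ}
    (hdeg : expDeg k = d) (hlast : k ⟨m - 1, by omega⟩ = 0)
    (hlow : ¬ ∃ i : Fin m, k i ≠ 0 ∧ (i : ℕ) < m - 2) :
    k = Finsupp.single (⟨m - 2, by omega⟩ : Fin m) d := by
  push_neg at hlow
  have hsupp : ∀ a : Fin m, k a ≠ 0 → a = (⟨m - 2, by omega⟩ : Fin m) := by
    intro a ha
    have h1 := hlow a ha
    have h2 : (a : ℕ) ≠ m - 1 := by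
      intro h
      apply ha
      rw [show a = (⟨m - 1, by omega⟩ : Fin m) from Fin.ext h]
      exact hlast
    have h3 := a.isLt
    apply Fin.ext
    show (a : ℕ) = m - 2
    omega
  have hpre : k (⟨m - 2, by omega⟩ : Fin m) = d := by
    rw [expDeg_eq_sum] at hdeg
    rw [← hdeg]
    symm
    apply Finset.sum_eq_single
    · intro b _ hb
      by_contra hb0
      exact hb (hsupp b hb0)
    · intro h; exact absurd (Finset.mem_univ _) h
  ext a
  by_cases h : a = (⟨m - 2, by omega⟩ : Fin m)
  · subst h; rw [hpre, Finsupp.single_apply, if_pos rfl]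
  · have hka : k a = 0 := by
      by_contra h0; exact h (hsupp a h0)
    rw [hka, Finsupp.single_apply, if_neg (fun hh => h hh.symm)]

lemma key_low {K : Type*} [Field K] {m : ℕ} (hm : 2 ≤ m)
    (J : Ideal (MvPolynomial (Fin m) K)) (hSS : StronglyStable J)
    (d : ℕ) (hx : (X (⟨m - 2, by omega⟩ : Fin m) : MvPolynomial (Fin m) K) ^ d ∈ J) :
    ∀ c : ℕ, ∀ k : Fin m →₀ ℕ, expDeg k = d → k ⟨m - 1, by omega⟩ = 0 →
      d * (m - 2) ≤ (∑ i : Fin m, k i * (i : ℕ)) + c → (monomial k (1 : K)) ∈ J := by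
  intro c
  induction c with
  | zero =>
    intro k hdeg hlast hW
    by_cases hlow : ∃ i : Fin m, k i ≠ 0 ∧ (i : ℕ) < m - 2
    · exfalso
      obtain ⟨i, hki, hiv⟩ := hlow
      have hlt : ∑ a : Fin m, k a * (a : ℕ) < ∑ a : Fin m, k a * (m - 2) := by
        apply Finset.sum_lt_sum
        · intro a _
          by_cases ha : a = (⟨m - 1, by omega⟩ : Fin m)
          · subst ha; simp [hlast]
          · have h2 : (a : ℕ) ≠ m - 1 := fun h => ha (Fin.ext h)
            have h3 := a.isLt
            exact Nat.mul_le_mul_left _ (by omega)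
        · exact ⟨i, Finset.mem_univ i,
            Nat.mul_lt_mul_of_pos_left hiv (Nat.pos_of_ne_zero hki)⟩
      rw [← Finset.sum_mul, ← expDeg_eq_sum, hdeg] at hlt
      omega
    · rw [eq_single_of_no_low hm k hdeg hlast hlow, ← X_pow_eq_monomial]
      exact hx
  | succ c ih =>
    intro k hdeg hlast hW
    by_cases hlow : ∃ i : Fin m, k i ≠ 0 ∧ (i : ℕ) < m - 2
    · obtain ⟨i, hki, hiv⟩ := hlow
      have hi' : (i : ℕ) + 1 < m := by omega
      set i' : Fin m := ⟨(i : ℕ) + 1, hi'⟩ with hi'def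
      set k₀ : Fin m →₀ ℕ := k - Finsupp.single i 1 with hk₀
      have hk : k₀ + Finsupp.single i 1 = k := finsupp_sub_add_cancel k i hki
      set k' : Fin m →₀ ℕ := k₀ + Finsupp.single i' 1 with hk'
      have hdeg0 : expDeg k₀ + 1 = d := by
        rw [← hdeg, ← hk, expDeg_add, expDeg_single]
      have hdeg' : expDeg k' = d := by
        rw [hk', expDeg_add, expDeg_single, hdeg0]
      have hine : ¬ (i = (⟨m - 1, by omega⟩ : Fin m)) := by
        intro h
        have := congrArg Fin.val h
        simp at this
        omega
      have hi'ne : ¬ (i' = (⟨m - 1, by omega⟩ : Fin m)) := by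
        intro h
        have := congrArg Fin.val h
        simp [hi'def] at this
        omega
      have hlast' : k' (⟨m - 1, by omega⟩ : Fin m) = 0 := by
        rw [hk', hk₀]
        simp only [Finsupp.add_apply, Finsupp.tsub_apply, Finsupp.single_apply]
        rw [if_neg hine, if_neg hi'ne, hlast]
        omega
      have hWk : (∑ a : Fin m, k a * (a : ℕ))
          = (∑ a : Fin m, k₀ a * (a : ℕ)) + (i : ℕ) := by
        conv_lhs => rw [← hk]
        exact W_add_single k₀ i
      have hWk' : (∑ a : Fin m, k' a * (a : ℕ))
          = (∑ a : Fin m, k₀ a * (a : ℕ)) + (i : ℕ) + 1 := by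
        rw [hk', W_add_single k₀ i']
        have hv : (i' : ℕ) = (i : ℕ) + 1 := rfl
        omega
      have hmem' : (monomial k' (1 : K)) ∈ J := by
        apply ih k' hdeg' hlast'
        rw [hWk']
        omega
      have hlt : i < i' := by
        rw [Fin.lt_def]
        simp [hi'def]
      have hk'i' : k' i' ≠ 0 := by
        rw [hk', Finsupp.add_apply, Finsupp.single_eq_same]
        omega
      have hres := hSS.2 k' hmem' i' i hlt hk'i'
      have hexp : k' + Finsupp.single i 1 - Finsupp.single i' 1 = k := by
        rw [hk', add_right_comm, finsupp_add_sub_cancel, hk]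
      rwa [hexp] at hres
    · rw [eq_single_of_no_low hm k hdeg hlast hlow, ← X_pow_eq_monomial]
      exact hx

theorem no_minGen_iff_colon {K : Type*} [Field K] {m : ℕ} (hm : 2 ≤ m)
    (J : Ideal (MvPolynomial (Fin m) K)) (hSS : StronglyStable J)
    (d : ℕ) (hd : 1 ≤ d)
    (hx : (X (⟨m - 2, by omega⟩ : Fin m) : MvPolynomial (Fin m) K) ^ d ∈ J) :
    (¬ ∃ k : Fin m →₀ ℕ, IsMinGen J k ∧ expDeg k = d + 1) ↔
      ∀ k : Fin m →₀ ℕ, expDeg k = d →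
        (MvPolynomial.monomial (k + Finsupp.single (⟨m - 1, by omega⟩ : Fin m) 1) (1 : K)) ∈ J →
          (MvPolynomial.monomial k (1 : K)) ∈ J := by
  constructor
  · intro hno k hdeg hmem
    set last : Fin m := ⟨m - 1, by omega⟩ with hlastdef
    have hdeg' : expDeg (k + Finsupp.single last 1) = d + 1 := by
      rw [expDeg_add, expDeg_single, hdeg]
    have hnotmin : ¬ IsMinGen J (k + Finsupp.single last 1) := fun h => hno ⟨_, h, hdeg'⟩
    rw [IsMinGen] at hnotmin
    push_neg at hnotmin
    obtain ⟨i, hi, hiJ⟩ := hnotmin hmem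
    by_cases hil : i = last
    · subst hil
      rwa [finsupp_add_sub_cancel] at hiJ
    · have hki : k i ≠ 0 := by
        rw [Finsupp.add_apply, Finsupp.single_apply, if_neg (fun h => hil h.symm)] at hi
        simpa using hi
      set u : Fin m →₀ ℕ := k - Finsupp.single i 1 with hu
      have hk : u + Finsupp.single i 1 = k := finsupp_sub_add_cancel k i hki
      have hexp1 : k + Finsupp.single last 1 - Finsupp.single i 1
          = u + Finsupp.single last 1 := by
        rw [← hk, add_right_comm, finsupp_add_sub_cancel]
      rw [hexp1] at hiJ
      have hilt : i < last := by
        rw [Fin.lt_def]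
        have h2 : (i : ℕ) ≠ m - 1 := fun h => hil (Fin.ext h)
        have h3 := i.isLt
        show (i : ℕ) < m - 1
        omega
      have hul : ((u + Finsupp.single last 1 : Fin m →₀ ℕ)) last ≠ 0 := by
        rw [Finsupp.add_apply, Finsupp.single_eq_same]
        omega
      have hres := hSS.2 _ hiJ last i hilt hul
      have hexp2 : u + Finsupp.single last 1 + Finsupp.single i 1 - Finsupp.single last 1
          = k := by
        rw [add_right_comm, finsupp_add_sub_cancel, hk]
      rwa [hexp2] at hres
  · intro hcol
    rintro ⟨k, hmin, hdeg⟩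
    set last : Fin m := ⟨m - 1, by omega⟩ with hlastdef
    by_cases hkl : k last = 0
    · have hex : ∃ i : Fin m, k i ≠ 0 := by
        by_contra h
        push_neg at h
        have : k = 0 := Finsupp.ext h
        rw [this] at hdeg
        simp [expDeg] at hdeg
      obtain ⟨i, hi⟩ := hex
      set u : Fin m →₀ ℕ := k - Finsupp.single i 1 with hu
      have hk : u + Finsupp.single i 1 = k := finsupp_sub_add_cancel k i hi
      have hdegu : expDeg u = d := by
        have h := expDeg_add u (Finsupp.single i 1)
        rw [hk, expDeg_single, hdeg] at h
        omega
      have hulast : u last = 0 := by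
        rw [hu, Finsupp.tsub_apply, hkl]
        omega
      have humem : (monomial u (1 : K)) ∈ J :=
        key_low hm J hSS d hx (d * (m - 2)) u hdegu hulast (Nat.le_add_left _ _)
      exact absurd humem (hmin.2 i hi)
    · set u : Fin m →₀ ℕ := k - Finsupp.single last 1 with hu
      have hk : u + Finsupp.single last 1 = k := finsupp_sub_add_cancel k last hkl
      have hdegu : expDeg u = d := by
        have h := expDeg_add u (Finsupp.single last 1)
        rw [hk, expDeg_single, hdeg] at h
        omega
      have humem : (monomial u (1 : K)) ∈ J := by
        apply hcol u hdegu
        rw [hk]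
        exact hmin.1
      exact absurd humem (hmin.2 last hkl)

end Paper
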